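/- Let A and B be real symmetric positive semidefinite m×m matrices such that A ⪯ B (i.e., B − A is positive semidefinite) and the column space (range) of A equals the column space of B. Then B† ⪯ A†, where A† and B† denote the Moore–Penrose pseudoinverses of A and B. -/

import Mathlib

open Matrix

/-- `P` is the Moore–Penrose pseudoinverse of `A`, characterized by the four
Penrose conditions. -/
def IsMoorePenroseInv {q : Type*} [Fintype q]
    (A P : Matrix q q ℝ) : Prop :=
  A * P * A = A ∧ P * A * P = P ∧ (A * P)ᵀ = A * P ∧ (P * A)ᵀ = P * A

section Aux
variable {m : ℕ}

theorem hermT {M : Matrix (Fin m) (Fin m) ℝ} (h : M.IsHermitian) : Mᵀ = M := by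
  rw [← conjTranspose_eq_transpose_of_trivial]; exact h

theorem exists_sym_sqrt {B : Matrix (Fin m) (Fin m) ℝ} (hB : B.PosSemidef) :
    ∃ S : Matrix (Fin m) (Fin m) ℝ, Sᵀ = S ∧ S * S = B ∧ S.PosSemidef := by
  open scoped MatrixOrder in
  have h0 : (0 : Matrix (Fin m) (Fin m) ℝ) ≤ B := Matrix.nonneg_iff_posSemidef.mpr hB
  open scoped MatrixOrder in
  have hS : (CFC.sqrt B).PosSemidef := Matrix.nonneg_iff_posSemidef.mp (CFC.sqrt_nonneg B)
  open scoped MatrixOrder in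
  exact ⟨CFC.sqrt B, hermT hS.1, CFC.sqrt_mul_sqrt_self B h0, hS⟩

/-- Antitonicity of the inverse on positive definite matrices. -/
theorem inv_antitone_posDef {A B : Matrix (Fin m) (Fin m) ℝ}
    (hA : A.PosDef) (hB : B.PosDef) (hAB : (B - A).PosSemidef) :
    (A⁻¹ - B⁻¹).PosSemidef := by
  classical
  obtain ⟨S, hSt, hSS, hSpsd⟩ := exists_sym_sqrt hB.posSemidef
  have hSdet : IsUnit S.det := by
    have hBdet : B.det ≠ 0 := hB.det_pos.ne'
    have hm : S.det * S.det = B.det := by rw [← det_mul, hSS]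
    exact isUnit_iff_ne_zero.mpr fun h => hBdet (by rw [← hm, h, mul_zero])
  have hTS : S⁻¹ * S = 1 := nonsing_inv_mul _ hSdet
  have hST : S * S⁻¹ = 1 := mul_nonsing_inv _ hSdet
  have hTt : (S⁻¹)ᵀ = S⁻¹ := by rw [transpose_nonsing_inv, hSt]
  have hCpsd : (S⁻¹ * A * S⁻¹).PosSemidef := by
    have := hA.posSemidef.mul_mul_conjTranspose_same S⁻¹
    rwa [conjTranspose_eq_transpose_of_trivial, hTt] at this
  have hTdet : S⁻¹.det ≠ 0 := by
    intro h
    have : (S⁻¹ * S).det = 0 := by rw [det_mul, h, zero_mul]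
    rw [hTS, det_one] at this
    exact one_ne_zero this
  have hCdet : IsUnit (S⁻¹ * A * S⁻¹).det := by
    refine isUnit_iff_ne_zero.mpr ?_
    rw [det_mul, det_mul]
    exact mul_ne_zero (mul_ne_zero hTdet hA.det_pos.ne') hTdet
  have hTBT : S⁻¹ * B * S⁻¹ = 1 := by
    rw [← hSS, ← mul_assoc, mul_assoc (S⁻¹ * S), hTS, one_mul, hST]
  have h1C : ((1 : Matrix (Fin m) (Fin m) ℝ) - S⁻¹ * A * S⁻¹).PosSemidef := by
    have key : (1 : Matrix (Fin m) (Fin m) ℝ) - S⁻¹ * A * S⁻¹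
        = S⁻¹ * (B - A) * S⁻¹ := by
      rw [mul_sub, sub_mul, hTBT]
    have := hAB.mul_mul_conjTranspose_same S⁻¹
    rwa [conjTranspose_eq_transpose_of_trivial, hTt, ← key] at this
  obtain ⟨R, hRt, hRR, hRpsd⟩ := exists_sym_sqrt hCpsd
  have hRdet : IsUnit R.det := by
    have hm : R.det * R.det = (S⁻¹ * A * S⁻¹).det := by rw [← det_mul, hRR]
    exact isUnit_iff_ne_zero.mpr fun h =>
      (isUnit_iff_ne_zero.mp hCdet) (by rw [← hm, h, mul_zero])
  have hRinvt : (R⁻¹)ᵀ = R⁻¹ := by rw [transpose_nonsing_inv, hRt]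
  have hRiR : R⁻¹ * R = 1 := nonsing_inv_mul _ hRdet
  have hRRi : R * R⁻¹ = 1 := mul_nonsing_inv _ hRdet
  have hCinv : ((S⁻¹ * A * S⁻¹)⁻¹ - 1).PosSemidef := by
    have key : (S⁻¹ * A * S⁻¹)⁻¹ - 1
        = R⁻¹ * (1 - S⁻¹ * A * S⁻¹) * R⁻¹ := by
      rw [mul_sub, sub_mul, mul_one, ← hRR, Matrix.mul_inv_rev, ← mul_assoc]
      congr 1
      rw [hRiR, one_mul, hRRi]
    have := h1C.mul_mul_conjTranspose_same R⁻¹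
    rwa [conjTranspose_eq_transpose_of_trivial, hRinvt, ← key] at this
  have final : A⁻¹ - B⁻¹ = S⁻¹ * ((S⁻¹ * A * S⁻¹)⁻¹ - 1) * S⁻¹ := by
    have hCi : (S⁻¹ * A * S⁻¹)⁻¹ = S * A⁻¹ * S := by
      rw [Matrix.mul_inv_rev, Matrix.mul_inv_rev, nonsing_inv_nonsing_inv _ hSdet, mul_assoc]
    rw [mul_sub, sub_mul, mul_one, hCi]
    have e1 : S⁻¹ * (S * A⁻¹ * S) * S⁻¹ = A⁻¹ := by
      rw [← mul_assoc S⁻¹ (S * A⁻¹) S, ← mul_assoc S⁻¹ S A⁻¹, hTS, one_mul,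
        mul_assoc, hST, mul_one]
    have e2 : S⁻¹ * S⁻¹ = B⁻¹ := by
      rw [← hSS, Matrix.mul_inv_rev]
    rw [e1, e2]
  rw [final]
  have := hCinv.mul_mul_conjTranspose_same S⁻¹
  rwa [conjTranspose_eq_transpose_of_trivial, hTt] at this

end Aux


section Aux2
variable {m : ℕ}

/-- Uniqueness of the Moore–Penrose inverse. -/
theorem mp_unique {X P Q : Matrix (Fin m) (Fin m) ℝ}
    (hP : IsMoorePenroseInv X P) (hQ : IsMoorePenroseInv X Q) : P = Q := by
  obtain ⟨hP1, hP2, hP3, hP4⟩ := hP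
  obtain ⟨hQ1, hQ2, hQ3, hQ4⟩ := hQ
  have h1 : X * P = X * Q := by
    calc X * P = (X * P)ᵀ := hP3.symm
      _ = Pᵀ * Xᵀ := transpose_mul _ _
      _ = Pᵀ * (X * Q * X)ᵀ := by rw [hQ1]
      _ = Pᵀ * (Xᵀ * (X * Q)ᵀ) := by rw [transpose_mul]
      _ = Pᵀ * (Xᵀ * (X * Q)) := by rw [hQ3]
      _ = (Pᵀ * Xᵀ) * (X * Q) := by rw [mul_assoc]
      _ = (X * P)ᵀ * (X * Q) := by rw [transpose_mul]
      _ = (X * P) * (X * Q) := by rw [hP3]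
      _ = (X * P * X) * Q := by rw [mul_assoc, mul_assoc, mul_assoc]
      _ = X * Q := by rw [hP1]
  have h2 : P * X = Q * X := by
    calc P * X = (P * X)ᵀ := hP4.symm
      _ = Xᵀ * Pᵀ := transpose_mul _ _
      _ = (X * (Q * X))ᵀ * Pᵀ := by rw [← mul_assoc, hQ1]
      _ = ((Q * X)ᵀ * Xᵀ) * Pᵀ := by rw [transpose_mul X (Q * X)]
      _ = (Q * X) * (Xᵀ * Pᵀ) := by rw [hQ4, mul_assoc]
      _ = (Q * X) * (P * X)ᵀ := by rw [transpose_mul]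
      _ = (Q * X) * (P * X) := by rw [hP4]
      _ = Q * (X * P * X) := by rw [mul_assoc, ← mul_assoc X P X]
      _ = Q * X := by rw [hP1]
  calc P = P * X * P := hP2.symm
    _ = P * (X * Q) := by rw [mul_assoc, h1]
    _ = (Q * X) * Q := by rw [← mul_assoc, h2]
    _ = Q := hQ2

/-- The Moore–Penrose inverse of a symmetric matrix is symmetric. -/
theorem mp_transpose {X P : Matrix (Fin m) (Fin m) ℝ}
    (hX : Xᵀ = X) (hP : IsMoorePenroseInv X P) : Pᵀ = P := by
  obtain ⟨h1, h2, h3, h4⟩ := hP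
  have key : IsMoorePenroseInv X Pᵀ := by
    refine ⟨?_, ?_, ?_, ?_⟩
    · calc X * Pᵀ * X = Xᵀ * Pᵀ * Xᵀ := by rw [hX]
        _ = (X * (P * X))ᵀ := by simp [transpose_mul, mul_assoc]
        _ = (X * P * X)ᵀ := by rw [mul_assoc]
        _ = Xᵀ := by rw [h1]
        _ = X := hX
    · calc Pᵀ * X * Pᵀ = Pᵀ * Xᵀ * Pᵀ := by rw [hX]
        _ = (P * (X * P))ᵀ := by simp [transpose_mul, mul_assoc]
        _ = (P * X * P)ᵀ := by rw [mul_assoc]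
        _ = Pᵀ := by rw [h2]
    · have e : X * Pᵀ = P * X := by
        calc X * Pᵀ = Xᵀ * Pᵀ := by rw [hX]
          _ = (P * X)ᵀ := (transpose_mul _ _).symm
          _ = P * X := h4
      rw [e, h4]
    · have e : Pᵀ * X = X * P := by
        calc Pᵀ * X = Pᵀ * Xᵀ := by rw [hX]
          _ = (X * P)ᵀ := (transpose_mul _ _).symm
          _ = X * P := h3
      rw [e, h3]
  exact mp_unique key ⟨h1, h2, h3, h4⟩

/-- Two symmetric idempotent matrices with the same range coincide. -/
theorem proj_eq {P Q : Matrix (Fin m) (Fin m) ℝ}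
    (hPt : Pᵀ = P) (hQt : Qᵀ = Q) (hP2 : P * P = P) (hQ2 : Q * Q = Q)
    (hr : ∀ x, (∃ y, P *ᵥ y = x) ↔ (∃ y, Q *ᵥ y = x)) : P = Q := by
  have ext_mulVec : ∀ (M N : Matrix (Fin m) (Fin m) ℝ),
      (∀ x, M *ᵥ x = N *ᵥ x) → M = N := by
    intro M N h
    ext i j
    have := congrFun (h (Pi.single j 1)) i
    simpa [mulVec_single] using this
  have hQP : Q * P = P := by
    apply ext_mulVec
    intro x
    obtain ⟨y, hy⟩ := (hr (P *ᵥ x)).mp ⟨x, rfl⟩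
    rw [← mulVec_mulVec, ← hy, mulVec_mulVec, hQ2]
  have hPQ : P * Q = Q := by
    apply ext_mulVec
    intro x
    obtain ⟨y, hy⟩ := (hr (Q *ᵥ x)).mpr ⟨x, rfl⟩
    rw [← mulVec_mulVec, ← hy, mulVec_mulVec, hP2]
  calc P = Pᵀ := hPt.symm
    _ = (Q * P)ᵀ := by rw [hQP]
    _ = Pᵀ * Qᵀ := transpose_mul _ _
    _ = P * Q := by rw [hPt, hQt]
    _ = Q := hPQ

end Aux2

/-- **Antitonicity of the Moore–Penrose pseudoinverse on psd matrices with equal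
ranges**: if `0 ⪯ A ⪯ B` and `range A = range B`, then `B† ⪯ A†`. -/
theorem pinv_antitone_of_le_of_range_eq (m : ℕ)
    (A B : Matrix (Fin m) (Fin m) ℝ)
    (hA : A.PosSemidef) (hB : B.PosSemidef)
    (hAB : (B - A).PosSemidef)
    (hrange : LinearMap.range A.mulVecLin = LinearMap.range B.mulVecLin)
    (Ap Bp : Matrix (Fin m) (Fin m) ℝ)
    (hAp : IsMoorePenroseInv A Ap) (hBp : IsMoorePenroseInv B Bp) :
    (Ap - Bp).PosSemidef := by
  classical
  have hAt : Aᵀ = A := hermT hA.1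
  have hBt : Bᵀ = B := hermT hB.1
  have hApt : Apᵀ = Ap := mp_transpose hAt hAp
  have hBpt : Bpᵀ = Bp := mp_transpose hBt hBp
  obtain ⟨hA1, hA2, hA3, hA4⟩ := hAp
  obtain ⟨hB1, hB2, hB3, hB4⟩ := hBp
  -- the projections
  obtain ⟨P, hPdef⟩ : ∃ P, P = A * Ap := ⟨_, rfl⟩
  obtain ⟨Q, hQdef⟩ : ∃ Q, Q = B * Bp := ⟨_, rfl⟩
  have hPcomm : P = Ap * A := by
    calc P = (A * Ap)ᵀ := by rw [hPdef, hA3]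
      _ = Apᵀ * Aᵀ := transpose_mul _ _
      _ = Ap * A := by rw [hApt, hAt]
  have hQcomm : Q = Bp * B := by
    calc Q = (B * Bp)ᵀ := by rw [hQdef, hB3]
      _ = Bpᵀ * Bᵀ := transpose_mul _ _
      _ = Bp * B := by rw [hBpt, hBt]
  have hPt : Pᵀ = P := by rw [hPdef, hA3]
  have hQt : Qᵀ = Q := by rw [hQdef, hB3]
  have hP2 : P * P = P := by
    rw [hPdef, mul_assoc, ← mul_assoc Ap A Ap, hA2]
  have hQ2 : Q * Q = Q := by
    rw [hQdef, mul_assoc, ← mul_assoc Bp B Bp, hB2]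
  -- projections agree since ranges agree
  have hrange' : ∀ x, (∃ y, A *ᵥ y = x) ↔ (∃ y, B *ᵥ y = x) := by
    intro x
    constructor
    · rintro ⟨y, rfl⟩
      have : A *ᵥ y ∈ LinearMap.range B.mulVecLin := by
        rw [← hrange]; exact ⟨y, rfl⟩
      obtain ⟨z, hz⟩ := this
      exact ⟨z, hz⟩
    · rintro ⟨y, rfl⟩
      have : B *ᵥ y ∈ LinearMap.range A.mulVecLin := by
        rw [hrange]; exact ⟨y, rfl⟩
      obtain ⟨z, hz⟩ := this
      exact ⟨z, hz⟩
  have hPQ : P = Q := by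
    apply proj_eq hPt hQt hP2 hQ2
    intro x
    have rP : (∃ y, P *ᵥ y = x) ↔ (∃ y, A *ᵥ y = x) := by
      constructor
      · rintro ⟨y, rfl⟩
        exact ⟨Ap *ᵥ y, by rw [mulVec_mulVec, ← hPdef]⟩
      · rintro ⟨y, rfl⟩
        refine ⟨A *ᵥ y, ?_⟩
        rw [mulVec_mulVec, hPdef, hA1]
    have rQ : (∃ y, Q *ᵥ y = x) ↔ (∃ y, B *ᵥ y = x) := by
      constructor
      · rintro ⟨y, rfl⟩
        exact ⟨Bp *ᵥ y, by rw [mulVec_mulVec, ← hQdef]⟩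
      · rintro ⟨y, rfl⟩
        refine ⟨B *ᵥ y, ?_⟩
        rw [mulVec_mulVec, hQdef, hB1]
    rw [rP, rQ, hrange']
  -- key algebraic identities
  have hAP : A * P = A := by rw [hPcomm, ← mul_assoc, hA1]
  have hPAp : P * Ap = Ap := by rw [hPcomm, hA2]
  have hBQ : B * Q = B := by rw [hQcomm, ← mul_assoc, hB1]
  have hQBp : Q * Bp = Bp := by rw [hQcomm, hB2]
  -- (1 - P) is psd
  have h1Pt : ((1 : Matrix (Fin m) (Fin m) ℝ) - P)ᵀ = 1 - P := by
    rw [transpose_sub, transpose_one, hPt]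
  have h1P2 : ((1 : Matrix (Fin m) (Fin m) ℝ) - P) * (1 - P) = 1 - P := by
    rw [sub_mul, one_mul, mul_sub, mul_one, hP2]
    abel
  have h1Ppsd : ((1 : Matrix (Fin m) (Fin m) ℝ) - P).PosSemidef := by
    have e : (1 : Matrix (Fin m) (Fin m) ℝ) - P = (1 - P)ᴴ * (1 - P) := by
      rw [conjTranspose_eq_transpose_of_trivial, h1Pt, h1P2]
    rw [e]
    exact posSemidef_conjTranspose_mul_self _
  -- the shifted matrices are positive definite
  have posdef_shift : ∀ (X Xp : Matrix (Fin m) (Fin m) ℝ), X.PosSemidef →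
      X * Xp = P → (X + (1 - P)).PosDef := by
    intro X Xp hX hXP
    refine PosDef.of_dotProduct_mulVec_pos ?_ ?_
    · exact hX.1.add h1Ppsd.1
    · intro x hx
      have hsum : x ⬝ᵥ (X + (1 - P)) *ᵥ x
          = x ⬝ᵥ X *ᵥ x + x ⬝ᵥ (1 - P) *ᵥ x := by
        rw [add_mulVec, dotProduct_add]
      have h1 : 0 ≤ x ⬝ᵥ X *ᵥ x := by simpa using hX.dotProduct_mulVec_nonneg x
      have h2 : 0 ≤ x ⬝ᵥ (1 - P) *ᵥ x := by simpa using h1Ppsd.dotProduct_mulVec_nonneg x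
      rw [star_trivial, hsum]
      rcases lt_or_eq_of_le h1 with h1' | h1'
      · linarith
      rcases lt_or_eq_of_le h2 with h2' | h2'
      · linarith
      exfalso
      have hXx : X *ᵥ x = 0 :=
        (hX.dotProduct_mulVec_zero_iff x).mp (by simpa using h1'.symm)
      have hPx : (1 - P) *ᵥ x = 0 :=
        (h1Ppsd.dotProduct_mulVec_zero_iff x).mp (by simpa using h2'.symm)
      have hxP : P *ᵥ x = x := by
        have e : x - P *ᵥ x = 0 := by
          rw [← hPx, sub_mulVec, one_mulVec]
        exact (sub_eq_zero.mp e).symm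
      have hxrange : x = X *ᵥ (Xp *ᵥ x) := by
        rw [mulVec_mulVec, hXP, hxP]
      have hXt : Xᵀ = X := hermT hX.1
      have key : (X *ᵥ (Xp *ᵥ x)) ⬝ᵥ x = 0 := by
        rw [dotProduct_comm, dotProduct_mulVec, ← mulVec_transpose, hXt, hXx,
          zero_dotProduct]
      have hzero : x ⬝ᵥ x = 0 := by
        nth_rewrite 1 [hxrange]
        exact key
      exact hx (dotProduct_self_eq_zero.mp hzero)
  have hA'pd : (A + (1 - P)).PosDef := posdef_shift A Ap hA hPdef.symm
  have hB'pd : (B + (1 - P)).PosDef := posdef_shift B Bp hB (hPQ.trans hQdef).symm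
  -- inverses of the shifted matrices
  have inv_shift : ∀ (X Xp : Matrix (Fin m) (Fin m) ℝ),
      X * P = X → P * Xp = Xp → X * Xp = P →
      (X + (1 - P))⁻¹ = Xp + (1 - P) := by
    intro X Xp hXP hPXp hXXp
    apply inv_eq_right_inv
    have e1 : X * (1 - P) = 0 := by rw [mul_sub, mul_one, hXP, sub_self]
    have e2 : ((1 : Matrix (Fin m) (Fin m) ℝ) - P) * Xp = 0 := by
      rw [sub_mul, one_mul, hPXp, sub_self]
    calc (X + (1 - P)) * (Xp + (1 - P))
        = X * Xp + X * (1 - P) + ((1 - P) * Xp + (1 - P) * (1 - P)) := by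
          rw [add_mul, mul_add, mul_add]
      _ = P + 0 + (0 + (1 - P)) := by rw [hXXp, e1, e2, h1P2]
      _ = 1 := by abel
  have hA'inv : (A + (1 - P))⁻¹ = Ap + (1 - P) := inv_shift A Ap hAP hPAp hPdef.symm
  have hB'inv : (B + (1 - P))⁻¹ = Bp + (1 - P) := by
    apply inv_shift B Bp
    · rw [hPQ]; exact hBQ
    · rw [hPQ]; exact hQBp
    · exact (hPQ.trans hQdef).symm
  -- apply inverse antitonicity
  have hdiff : ((B + (1 - P)) - (A + (1 - P))).PosSemidef := by
    have e : (B + (1 - P)) - (A + (1 - P)) = B - A := by abel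
    rw [e]; exact hAB
  have key := inv_antitone_posDef hA'pd hB'pd hdiff
  rw [hA'inv, hB'inv] at key
  have e : Ap + (1 - P) - (Bp + (1 - P)) = Ap - Bp := by abel
  rwa [e] at key
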